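/- For a fully connected deterministic MDP with a single reward source r_g > 0 at state s_g and discount factor 0 < γ < 1, the value at the reward state equals V(s_g) = r_g / (1 − γ^{φ(s_g)}), where φ(s_g) is the minimum cycle length at s_g and V(s_g) is the supremum over all infinite action sequences starting at s_g of the discounted return. -/

import Mathlib

/-- The trajectory induced by an infinite action sequence `a` from initial
state `s`: `traj T s a 0 = s` and `traj T s a (t+1) = T (traj T s a t) (a t)`. -/
def traj {S A : Type*} (T : S → A → S) (s : S) (a : ℕ → A) : ℕ → S
  | 0 => s
  | t + 1 => T (traj T s a t) (a t)

lemma traj_add {S A : Type*} (T : S → A → S) (s : S) (a : ℕ → A) (t m : ℕ) :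
    traj T s a (t + m) = ((List.range' t m).map a).foldl T (traj T s a t) := by
  induction m with
  | zero => simp
  | succ m ih =>
    rw [List.range'_concat, List.map_append, List.foldl_append, ← ih]
    simp [← Nat.add_assoc, traj]

/-- For a fully connected deterministic MDP with a single reward source
`r_g > 0` at state `s_g` and discount factor `0 < γ < 1`, the value at the
reward state — the supremum over all infinite action sequences of the
discounted return — equals `r_g / (1 - γ ^ φ(s_g))`, where `φ(s_g)` is the
minimum cycle length at `s_g`. -/
theorem single_source_value_at_goal
    {S A : Type*} [Fintype S] [Nonempty S] [Fintype A] [Nonempty A]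
    (T : S → A → S) (R : S → ℝ) (γ : ℝ) (hγ0 : 0 < γ) (hγ1 : γ < 1)
    (hconn : ∀ s s' : S, ∃ l : List A, l.foldl T s = s')
    (s_g : S) (r_g : ℝ) (hr : 0 < r_g)
    (hRg : R s_g = r_g) (hR0 : ∀ s : S, s ≠ s_g → R s = 0) :
    (⨆ a : ℕ → A, ∑' t : ℕ, γ ^ t * R (traj T s_g a t))
      = r_g /
        (1 - γ ^ sInf {t : ℕ | 1 ≤ t ∧ ∃ l : List A, l.length = t ∧ l.foldl T s_g = s_g}) := by
  classical
  set C := {t : ℕ | 1 ≤ t ∧ ∃ l : List A, l.length = t ∧ l.foldl T s_g = s_g} with hC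
  obtain ⟨a0⟩ := (inferInstance : Nonempty A)
  obtain ⟨l0, hl0⟩ := hconn (T s_g a0) s_g
  have hCne : C.Nonempty := ⟨l0.length + 1, by
    refine ⟨Nat.le_add_left 1 _, a0 :: l0, by simp, ?_⟩
    simpa using hl0⟩
  set n := sInf C with hn
  obtain ⟨hn1, l, hlen, hfold⟩ := Nat.sInf_mem hCne
  have hnpos : 0 < n := hn1
  have hγn1 : γ ^ n < 1 := pow_lt_one₀ hγ0.le hγ1 hnpos.ne'
  have hγnn : 0 ≤ γ ^ n := pow_nonneg hγ0.le n
  have hpos : 0 < 1 - γ ^ n := by linarith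
  have hRnn : ∀ s, 0 ≤ R s := by
    intro s; by_cases h : s = s_g
    · subst h; rw [hRg]; exact hr.le
    · rw [hR0 s h]
  have hRle : ∀ s, R s ≤ r_g := by
    intro s; by_cases h : s = s_g
    · subst h; rw [hRg]
    · rw [hR0 s h]; exact hr.le
  have hFsum : Summable (fun k : ℕ => γ ^ (n * k) * r_g) := by
    have h1 : (fun k : ℕ => γ ^ (n * k) * r_g) = fun k => (γ ^ n) ^ k * r_g := by
      funext k; rw [pow_mul]
    rw [h1]
    exact (summable_geometric_of_lt_one hγnn hγn1).mul_right r_g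
  have hFval : (∑' k : ℕ, γ ^ (n * k) * r_g) = r_g / (1 - γ ^ n) := by
    have h1 : (fun k : ℕ => γ ^ (n * k) * r_g) = fun k => (γ ^ n) ^ k * r_g := by
      funext k; rw [pow_mul]
    rw [h1, tsum_mul_right, tsum_geometric_of_lt_one hγnn hγn1, div_eq_mul_inv, mul_comm]
  have hgsum : ∀ a : ℕ → A, Summable (fun t : ℕ => γ ^ t * R (traj T s_g a t)) := by
    intro a
    refine Summable.of_nonneg_of_le (fun t => mul_nonneg (pow_nonneg hγ0.le t) (hRnn _))
      (fun t => mul_le_mul_of_nonneg_left (hRle _) (pow_nonneg hγ0.le t))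
      ((summable_geometric_of_lt_one hγ0.le hγ1).mul_right r_g)
  -- upper bound
  have hupper : ∀ a : ℕ → A,
      (∑' t : ℕ, γ ^ t * R (traj T s_g a t)) ≤ r_g / (1 - γ ^ n) := by
    intro a
    have gap : ∀ t t' : ℕ, t < t' → traj T s_g a t = s_g → traj T s_g a t' = s_g →
        t + n ≤ t' := by
      intro t t' htt ht ht'
      have hm : t + (t' - t) = t' := by omega
      have hseg := traj_add T s_g a t (t' - t)
      rw [hm, ht, ht'] at hseg
      have hmem : t' - t ∈ C := ⟨by omega, (List.range' t (t' - t)).map a, by simp, hseg.symm⟩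
      have := Nat.sInf_le hmem
      omega
    set P : ℕ → Prop := fun i => traj T s_g a i = s_g with hP
    set c : ℕ → ℕ := fun t => ((Finset.range t).filter P).card with hc
    have hcbound : ∀ t, P t → n * c t ≤ t := by
      intro t
      induction t using Nat.strong_induction_on with
      | _ t ih =>
        intro hPt
        by_cases h0 : c t = 0
        · simp [h0]
        · have hFne : ((Finset.range t).filter P).Nonempty :=
            Finset.card_pos.mp (Nat.pos_of_ne_zero h0)
          set t0 := ((Finset.range t).filter P).max' hFne with ht0
          have ht0mem := ((Finset.range t).filter P).max'_mem hFne
          have ht0lt : t0 < t := Finset.mem_range.mp (Finset.mem_filter.mp ht0mem).1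
          have ht0P : P t0 := (Finset.mem_filter.mp ht0mem).2
          have hset : (Finset.range t).filter P = insert t0 ((Finset.range t0).filter P) := by
            ext i
            simp only [Finset.mem_insert, Finset.mem_filter, Finset.mem_range]
            constructor
            · rintro ⟨hi, hPi⟩
              rcases eq_or_lt_of_le (Finset.le_max' _ i
                  (Finset.mem_filter.mpr ⟨Finset.mem_range.mpr hi, hPi⟩)) with h | h
              · exact Or.inl h
              · exact Or.inr ⟨h, hPi⟩
            · rintro (rfl | ⟨hi, hPi⟩)
              · exact ⟨ht0lt, ht0P⟩
              · exact ⟨hi.trans ht0lt, hPi⟩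
          have hnotmem : t0 ∉ (Finset.range t0).filter P := by
            simp [Finset.mem_filter]
          have hcard : c t = c t0 + 1 := by
            simp only [hc]
            rw [hset, Finset.card_insert_of_notMem hnotmem]
          have h1 := ih t0 ht0lt ht0P
          have h2 := gap t0 t ht0lt ht0P hPt
          have h3 : n * c t0 + n ≤ t := le_trans (Nat.add_le_add_right h1 n) h2
          rw [hcard, Nat.mul_add, Nat.mul_one]
          exact h3
    have hcmono : ∀ t t' : ℕ, P t → t < t' → c t < c t' := by
      intro t t' hPt htt
      apply Finset.card_lt_card
      rw [Finset.ssubset_iff_of_subset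
        (Finset.filter_subset_filter P (Finset.range_subset_range.mpr htt.le))]
      exact ⟨t, Finset.mem_filter.mpr ⟨Finset.mem_range.mpr htt, hPt⟩, by simp⟩
    have hsupp : Function.support (fun t : ℕ => γ ^ t * R (traj T s_g a t)) ⊆ {t | P t} := by
      intro t ht
      by_contra h
      exact ht (by simp [hR0 _ h])
    rw [← tsum_subtype_eq_of_support_subset hsupp]
    have hinj : Function.Injective (fun t : {t : ℕ // t ∈ {t | P t}} => c t.1) := by
      rintro ⟨t, ht⟩ ⟨t', ht'⟩ h
      simp only at h
      rcases lt_trichotomy t t' with hlt | heq | hgt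
      · exact absurd h (hcmono t t' ht hlt).ne
      · simpa using heq
      · exact absurd h.symm (hcmono t' t ht' hgt).ne
    refine le_trans (Summable.tsum_le_tsum_of_inj _ hinj
      (fun k _ => mul_nonneg (pow_nonneg hγ0.le _) hr.le) ?_
      ((hgsum a).subtype _) hFsum) hFval.le
    rintro ⟨t, ht⟩
    have hPt : P t := ht
    simp only
    rw [show traj T s_g a t = s_g from hPt, hRg]
    exact mul_le_mul_of_nonneg_right
      (pow_le_pow_of_le_one hγ0.le hγ1.le (hcbound t hPt)) hr.le
  -- lower bound via periodic policy
  have hmodlt : ∀ t : ℕ, t % n < l.length := by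
    intro t; rw [hlen]; exact Nat.mod_lt _ hnpos
  set ap : ℕ → A := fun t => l.get ⟨t % n, hmodlt t⟩ with hap
  have hperiod : ∀ k : ℕ, traj T s_g ap (n * k) = s_g := by
    intro k
    induction k with
    | zero => simp [traj]
    | succ k ih =>
      have hsplit : n * (k + 1) = n * k + n := by ring
      rw [hsplit, traj_add, ih]
      have hlist : (List.range' (n * k) n).map ap = l := by
        apply List.ext_getElem
        · simp [hlen, hn]
        · intro i h1 h2
          simp only [List.getElem_map, List.getElem_range']
          have hin : i < n := by simpa using h1
          have hmod : (n * k + 1 * i) % n = i := by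
            rw [one_mul, Nat.mul_add_mod]
            exact Nat.mod_eq_of_lt hin
          simp only [hap, List.get_eq_getElem]
          simp only [hmod]
      rw [hlist, hfold]
  have hlower : r_g / (1 - γ ^ n) ≤ ∑' t : ℕ, γ ^ t * R (traj T s_g ap t) := by
    rw [← hFval]
    refine Summable.tsum_le_tsum_of_inj (fun k : ℕ => n * k)
      (fun k k' h => by exact Nat.eq_of_mul_eq_mul_left hnpos h)
      (fun t _ => mul_nonneg (pow_nonneg hγ0.le t) (hRnn _))
      (fun k => by rw [hperiod k, hRg]) hFsum (hgsum ap)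
  have hbdd : BddAbove (Set.range fun a : ℕ → A => ∑' t : ℕ, γ ^ t * R (traj T s_g a t)) := by
    refine ⟨r_g / (1 - γ ^ n), ?_⟩
    rintro x ⟨a, rfl⟩
    exact hupper a
  exact le_antisymm (ciSup_le hupper) (le_trans hlower (le_ciSup hbdd ap))
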